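/- Let $g_1,\dots,g_N \in \mathbb{R}^d$, fix $j$, and suppose $g_j \in \mathrm{span}\{g_{j'} : j' \ne j\}$. Let $S = \sum_{j' \ne j} g_{j'} g_{j'}^\top$ and let $c > 0$. Then $\mathrm{pdet}(S + c^2 g_j g_j^\top) = \mathrm{pdet}(S)\,(1 + c^2\, g_j^\top S^+ g_j)$ and $\mathrm{rank}(S + c^2 g_j g_j^\top) = \mathrm{rank}(S)$. -/

import Mathlib

open Matrix
open scoped Classical

/-- The pseudo-determinant of a real square matrix: the product of the nonzero eigenvalues
if the matrix is symmetric (Hermitian), and (junk value) `0` otherwise. -/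
noncomputable def pdet {d : ℕ} (A : Matrix (Fin d) (Fin d) ℝ) : ℝ :=
  if h : A.IsHermitian then
    ∏ i : Fin d, (if h.eigenvalues i = 0 then 1 else h.eigenvalues i)
  else 0

/-- `B` satisfies the four Penrose conditions for being the Moore–Penrose pseudoinverse
of `A` (over `ℝ`). -/
def IsMoorePenroseInverse {d : ℕ} (A B : Matrix (Fin d) (Fin d) ℝ) : Prop :=
  A * B * A = A ∧ B * A * B = B ∧ (A * B)ᵀ = A * B ∧ (B * A)ᵀ = B * A

lemma my_vecMulVec_mulVec {d : ℕ} (a b x : Fin d → ℝ) :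
    vecMulVec a b *ᵥ x = (b ⬝ᵥ x) • a := by
  ext i
  simp only [vecMulVec, mulVec, dotProduct, of_apply, Pi.smul_apply, smul_eq_mul]
  rw [Finset.sum_mul]
  exact Finset.sum_congr rfl (fun x _ => by ring)

lemma my_mul_vecMulVec {d : ℕ} (A : Matrix (Fin d) (Fin d) ℝ) (a b : Fin d → ℝ) :
    A * vecMulVec a b = vecMulVec (A *ᵥ a) b := by
  ext i k
  simp only [vecMulVec, mul_apply, mulVec, dotProduct, of_apply]
  rw [Finset.sum_mul]
  exact Finset.sum_congr rfl (fun x _ => by ring)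

lemma my_smul_vecMulVec {d : ℕ} (r : ℝ) (a b : Fin d → ℝ) :
    r • vecMulVec a b = vecMulVec (r • a) b := by
  ext i k
  simp [vecMulVec, mul_assoc]

lemma mp_unique {d : ℕ} {A B C : Matrix (Fin d) (Fin d) ℝ}
    (hB : IsMoorePenroseInverse A B) (hC : IsMoorePenroseInverse A C) : B = C := by
  obtain ⟨hB1, hB2, hB3, hB4⟩ := hB
  obtain ⟨hC1, hC2, hC3, hC4⟩ := hC
  have hAB : A * B = A * C := by
    calc A * B = (A * B)ᵀ := hB3.symm
    _ = ((A * C) * (A * B))ᵀ := by rw [show (A * C) * (A * B) = (A * C * A) * B by simp only [Matrix.mul_assoc], hC1]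
    _ = (A * B)ᵀ * (A * C)ᵀ := by rw [transpose_mul]
    _ = (A * B) * (A * C) := by rw [hB3, hC3]
    _ = (A * B * A) * C := by simp only [Matrix.mul_assoc]
    _ = A * C := by rw [hB1]
  have hBA : B * A = C * A := by
    calc B * A = (B * A)ᵀ := hB4.symm
    _ = ((B * A) * (C * A))ᵀ := by rw [show (B * A) * (C * A) = B * (A * C * A) by simp only [Matrix.mul_assoc], hC1]
    _ = (C * A)ᵀ * (B * A)ᵀ := by rw [transpose_mul]
    _ = (C * A) * (B * A) := by rw [hB4, hC4]
    _ = C * (A * B * A) := by simp only [Matrix.mul_assoc]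
    _ = C * A := by rw [hB1]
  calc B = B * A * B := hB2.symm
  _ = C * (A * B) := by rw [hBA]; simp only [Matrix.mul_assoc]
  _ = C * (A * C) := by rw [hAB]
  _ = C * A * C := by simp only [Matrix.mul_assoc]
  _ = C := hC2

lemma det_add_kernelProj {d : ℕ} (A K : Matrix (Fin d) (Fin d) ℝ)
    (hA : A.IsHermitian) (hKA : K * A = 0)
    (hfix : ∀ x, A *ᵥ x = 0 → K *ᵥ x = x) :
    (A + K).det = pdet A := by
  let U : Matrix (Fin d) (Fin d) ℝ := hA.eigenvectorUnitary
  have hUU : star U * U = 1 := mem_unitaryGroup_iff'.mp hA.eigenvectorUnitary.2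
  have hUU' : U * star U = 1 := mem_unitaryGroup_iff.mp hA.eigenvectorUnitary.2
  let D : Matrix (Fin d) (Fin d) ℝ := diagonal hA.eigenvalues
  have hspec : star U * A * U = D := by
    have := hA.conjStarAlgAut_star_eigenvectorUnitary
    simpa [D, U] using this
  have hAU : A * U = U * D := by
    calc A * U = 1 * A * U := by rw [Matrix.one_mul]
    _ = U * (star U * A * U) := by rw [← hUU']; simp only [Matrix.mul_assoc]
    _ = U * D := by rw [hspec]
  let f : Fin d → ℝ := fun i => if hA.eigenvalues i = 0 then 1 else 0
  have hMD : (star U * K * U) * D = 0 := by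
    calc (star U * K * U) * D = star U * K * (U * D) := by simp only [Matrix.mul_assoc]
    _ = star U * K * (A * U) := by rw [hAU]
    _ = star U * (K * A) * U := by simp only [Matrix.mul_assoc]
    _ = 0 := by rw [hKA, Matrix.mul_zero, Matrix.zero_mul]
  have hM : star U * K * U = diagonal f := by
    ext i k
    by_cases hk : hA.eigenvalues k = 0
    · have hcol : A *ᵥ (fun l => U l k) = 0 := by
        ext i'
        have h1 : (A * U) i' k = (U * D) i' k := by rw [hAU]
        have h2 : (U * D) i' k = 0 := by
          rw [mul_diagonal, hk, mul_zero]
        simpa [mul_apply, mulVec, dotProduct] using h1.trans h2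
      have hKcol := hfix _ hcol
      have hKU : ∀ l, (K * U) l k = U l k := by
        intro l
        have := congrFun hKcol l
        simpa [mul_apply, mulVec, dotProduct] using this
      have : (star U * K * U) i k = (star U * U) i k := by
        rw [Matrix.mul_assoc, mul_apply, mul_apply]
        exact Finset.sum_congr rfl fun l _ => by rw [hKU l]
      rw [this, hUU]
      by_cases h : i = k
      · subst h; simp [Matrix.one_apply, f, hk, diagonal_apply]
      · simp [Matrix.one_apply, f, h, diagonal_apply]
    · have h1 : (star U * K * U) i k * hA.eigenvalues k = 0 := by
        have := congrFun (congrFun hMD i) k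
        simpa [mul_diagonal, D] using this
      have h2 : (star U * K * U) i k = 0 :=
        (mul_eq_zero.mp h1).resolve_right hk
      rw [h2]
      by_cases h : i = k
      · subst h; simp [diagonal_apply, f, hk]
      · simp [diagonal_apply, f, h]
  have hconj : star U * (A + K) * U = D + diagonal f := by
    rw [Matrix.mul_add, Matrix.add_mul, hspec, hM]
  have hdetU : det (star U) * det U = 1 := by rw [← det_mul, hUU, det_one]
  have hprod : (A + K).det = ∏ i, (hA.eigenvalues i + f i) := by
    calc (A + K).det = det (star U) * det U * det (A + K) := by rw [hdetU, one_mul]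
    _ = det (star U * (A + K) * U) := by rw [det_mul, det_mul]; ring
    _ = det (D + diagonal f) := by rw [hconj]
    _ = ∏ i, (hA.eigenvalues i + f i) := by
        rw [diagonal_add, det_diagonal]
  rw [hprod, pdet, dif_pos hA]
  refine Finset.prod_congr rfl fun i _ => ?_
  by_cases hi : hA.eigenvalues i = 0 <;> simp [f, hi]

lemma my_sum_mulVec {d : ℕ} {ι : Type*} (s : Finset ι) (A : ι → Matrix (Fin d) (Fin d) ℝ)
    (x : Fin d → ℝ) : (∑ k ∈ s, A k) *ᵥ x = ∑ k ∈ s, A k *ᵥ x := by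
  induction s using Finset.cons_induction with
  | empty => simp [Matrix.zero_mulVec]
  | cons a s ha ih => simp [Finset.sum_insert ha, Matrix.add_mulVec, ih]

lemma my_dotProduct_sum {d : ℕ} {ι : Type*} (s : Finset ι) (v : Fin d → ℝ) (w : ι → (Fin d → ℝ)) :
    v ⬝ᵥ (∑ k ∈ s, w k) = ∑ k ∈ s, v ⬝ᵥ w k := by
  induction s using Finset.cons_induction with
  | empty => simp
  | cons a s ha ih => simp [Finset.sum_insert ha, dotProduct_add, ih]

/-- Let `S = ∑_{j' ≠ j} g_{j'} g_{j'}ᵀ` and suppose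
`g j ∈ span {g j' : j' ≠ j}`. Then for any `c > 0`,
`pdet (S + c² g_j g_jᵀ) = pdet S * (1 + c² g_jᵀ S⁺ g_j)` and the rank is unchanged. -/
theorem pdet_rank_perturbation {N d : ℕ} (g : Fin N → (Fin d → ℝ)) (j : Fin N)
    (hspan : g j ∈ Submodule.span ℝ (g '' {j' | j' ≠ j}))
    (Sp : Matrix (Fin d) (Fin d) ℝ)
    (hSp : IsMoorePenroseInverse (∑ j' ∈ Finset.univ.filter (· ≠ j),
      vecMulVec (g j') (g j')) Sp)
    (c : ℝ) (hc : 0 < c) :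
    pdet ((∑ j' ∈ Finset.univ.filter (· ≠ j), vecMulVec (g j') (g j')) +
        c ^ 2 • vecMulVec (g j) (g j))
      = pdet (∑ j' ∈ Finset.univ.filter (· ≠ j), vecMulVec (g j') (g j')) *
        (1 + c ^ 2 * (g j ⬝ᵥ (Sp *ᵥ g j))) ∧
    ((∑ j' ∈ Finset.univ.filter (· ≠ j), vecMulVec (g j') (g j')) +
        c ^ 2 • vecMulVec (g j) (g j)).rank
      = (∑ j' ∈ Finset.univ.filter (· ≠ j), vecMulVec (g j') (g j')).rank := by
  set S : Matrix (Fin d) (Fin d) ℝ :=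
    ∑ j' ∈ Finset.univ.filter (· ≠ j), vecMulVec (g j') (g j') with hSdef
  set q : Fin d → ℝ := g j with hqdef
  obtain ⟨h1, h2, h3, h4⟩ := hSp
  have hST : Sᵀ = S := by
    rw [hSdef, transpose_sum]
    refine Finset.sum_congr rfl fun k _ => ?_
    ext i l
    simp [vecMulVec, mul_comm]
  have hSH : S.IsHermitian := by
    show Sᴴ = S
    rw [conjTranspose]
    ext i l
    simpa using congrFun (congrFun hST i) l
  -- Sp is symmetric
  have hSpT_mp : IsMoorePenroseInverse S Spᵀ := by
    refine ⟨?_, ?_, ?_, ?_⟩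
    · have e1 : (S * Sp * S)ᵀ = S * Spᵀ * S := by
        rw [transpose_mul, transpose_mul, hST]
        simp only [Matrix.mul_assoc]
      rw [← e1, h1, hST]
    · have e1 : (Sp * S * Sp)ᵀ = Spᵀ * S * Spᵀ := by
        rw [transpose_mul, transpose_mul, hST]
        simp only [Matrix.mul_assoc]
      rw [← e1, h2]
    · have e1 : (S * Spᵀ)ᵀ = Sp * S := by
        rw [transpose_mul, transpose_transpose, hST]
      have e2 : S * Spᵀ = Sp * S := by
        calc S * Spᵀ = Sᵀ * Spᵀ := by rw [hST]
        _ = (Sp * S)ᵀ := (transpose_mul _ _).symm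
        _ = Sp * S := h4
      rw [e1, e2]
    · have e1 : (Spᵀ * S)ᵀ = S * Sp := by
        rw [transpose_mul, transpose_transpose, hST]
      have e2 : Spᵀ * S = S * Sp := by
        calc Spᵀ * S = Spᵀ * Sᵀ := by rw [hST]
        _ = (S * Sp)ᵀ := (transpose_mul _ _).symm
        _ = S * Sp := h3
      rw [e1, e2]
  have hSpT : Spᵀ = Sp := mp_unique hSpT_mp ⟨h1, h2, h3, h4⟩
  have hSP : S * (Sp * S) = S := by rw [← Matrix.mul_assoc, h1]
  have hPS : (Sp * S) * S = S := by
    calc (Sp * S) * S = (((Sp * S) * S)ᵀ)ᵀ := (transpose_transpose _).symm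
    _ = (Sᵀ * (Sp * S)ᵀ)ᵀ := by rw [transpose_mul]
    _ = (S * (Sp * S))ᵀ := by rw [hST, h4]
    _ = Sᵀ := by rw [hSP]
    _ = S := hST
  have hSSp_eq : S * Sp = Sp * S := by
    calc S * Sp = (S * Sp)ᵀ := h3.symm
    _ = Spᵀ * Sᵀ := transpose_mul _ _
    _ = Sp * S := by rw [hSpT, hST]
  -- quadratic form
  have hSmul : ∀ x, S *ᵥ x = ∑ k ∈ Finset.univ.filter (· ≠ j), (g k ⬝ᵥ x) • g k := by
    intro x
    rw [hSdef, my_sum_mulVec]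
    exact Finset.sum_congr rfl fun k _ => my_vecMulVec_mulVec _ _ _
  have hquad : ∀ x, x ⬝ᵥ (S *ᵥ x) = ∑ k ∈ Finset.univ.filter (· ≠ j), (g k ⬝ᵥ x) ^ 2 := by
    intro x
    rw [hSmul, my_dotProduct_sum]
    refine Finset.sum_congr rfl fun k _ => ?_
    rw [dotProduct_smul, smul_eq_mul, dotProduct_comm, sq]
  have hquad0 : ∀ x, x ⬝ᵥ (S *ᵥ x) = 0 → ∀ k, k ≠ j → g k ⬝ᵥ x = 0 := by
    intro x hx k hk
    rw [hquad] at hx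
    have := (Finset.sum_eq_zero_iff_of_nonneg (fun k _ => sq_nonneg (g k ⬝ᵥ x))).mp hx k
      (by simp [hk])
    exact pow_eq_zero_iff (two_ne_zero) |>.mp this
  have hSker : ∀ x, x ⬝ᵥ (S *ᵥ x) = 0 → S *ᵥ x = 0 := by
    intro x hx
    rw [hSmul]
    refine Finset.sum_eq_zero fun k hk => ?_
    rw [hquad0 x hx k (by simpa using hk), zero_smul]
  have hSnonneg : ∀ x, 0 ≤ x ⬝ᵥ (S *ᵥ x) := by
    intro x
    rw [hquad]
    exact Finset.sum_nonneg fun k _ => sq_nonneg _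
  -- Sp * S fixes the g k, k ≠ j, hence fixes q
  have hPfix : ∀ k, k ≠ j → (Sp * S) *ᵥ g k = g k := by
    intro k hk
    set x : Fin d → ℝ := g k - (Sp * S) *ᵥ g k with hx
    have hSx : S *ᵥ x = 0 := by
      rw [hx, mulVec_sub, mulVec_mulVec, ← Matrix.mul_assoc, h1, sub_self]
    have hPx : (Sp * S) *ᵥ x = 0 := by
      rw [← mulVec_mulVec, hSx, mulVec_zero]
    have hdots : g k ⬝ᵥ x = 0 :=
      hquad0 x (by rw [hSx, dotProduct_zero]) k hk
    have e2 : ((Sp * S) *ᵥ g k) ⬝ᵥ x = 0 := by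
      calc ((Sp * S) *ᵥ g k) ⬝ᵥ x = x ⬝ᵥ ((Sp * S) *ᵥ g k) := dotProduct_comm _ _
      _ = (x ᵥ* (Sp * S)) ⬝ᵥ g k := dotProduct_mulVec _ _ _
      _ = ((Sp * S)ᵀ *ᵥ x) ⬝ᵥ g k := by rw [mulVec_transpose]
      _ = ((Sp * S) *ᵥ x) ⬝ᵥ g k := by rw [h4]
      _ = 0 := by rw [hPx, zero_dotProduct]
    have hxx : x ⬝ᵥ x = 0 := by
      calc x ⬝ᵥ x = g k ⬝ᵥ x - ((Sp * S) *ᵥ g k) ⬝ᵥ x := by rw [hx, sub_dotProduct]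
      _ = 0 := by rw [hdots, e2, sub_zero]
    have hx0 : x = 0 := dotProduct_self_eq_zero.mp hxx
    have := sub_eq_zero.mp (hx ▸ hx0 : g k - (Sp * S) *ᵥ g k = 0)
    exact this.symm
  have hPq : (Sp * S) *ᵥ q = q := by
    have hsub : Submodule.span ℝ (g '' {j' | j' ≠ j}) ≤
        LinearMap.eqLocus (Sp * S).mulVecLin LinearMap.id := by
      rw [Submodule.span_le]
      rintro y ⟨k, hk, rfl⟩
      exact LinearMap.mem_eqLocus.mpr (by simpa using hPfix k hk)
    have := hsub hspan
    simpa using LinearMap.mem_eqLocus.mp this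
  set K : Matrix (Fin d) (Fin d) ℝ := 1 - Sp * S with hKdef
  have hKS : K * S = 0 := by rw [hKdef, Matrix.sub_mul, Matrix.one_mul, hPS, sub_self]
  have hKfix : ∀ x, S *ᵥ x = 0 → K *ᵥ x = x := by
    intro x hx
    rw [hKdef, sub_mulVec, one_mulVec, ← mulVec_mulVec, hx, mulVec_zero, sub_zero]
  set S' : Matrix (Fin d) (Fin d) ℝ := S + c ^ 2 • vecMulVec q q with hS'def
  have hS'H : S'.IsHermitian := by
    show S'ᴴ = S'
    rw [conjTranspose]
    have : S'ᵀ = S' := by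
      rw [hS'def, transpose_add, transpose_smul, hST]
      congr 1
      ext i l
      simp [vecMulVec, mul_comm]
    ext i l
    simpa using congrFun (congrFun this i) l
  have hKq : K *ᵥ q = 0 := by
    rw [hKdef, sub_mulVec, one_mulVec, hPq, sub_self]
  have hKS' : K * S' = 0 := by
    rw [hS'def, Matrix.mul_add, hKS, Matrix.mul_smul, my_mul_vecMulVec, hKq, zero_add]
    have : vecMulVec (0 : Fin d → ℝ) q = 0 := by ext i l; simp [vecMulVec]
    rw [this, smul_zero]
  have hS'S : ∀ x, S' *ᵥ x = 0 → S *ᵥ x = 0 := by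
    intro x hx
    have h0 : x ⬝ᵥ (S' *ᵥ x) = 0 := by rw [hx, dotProduct_zero]
    have hexp : x ⬝ᵥ (S' *ᵥ x) = x ⬝ᵥ (S *ᵥ x) + c ^ 2 * (q ⬝ᵥ x) ^ 2 := by
      rw [hS'def, add_mulVec, dotProduct_add, smul_mulVec, my_vecMulVec_mulVec]
      have : x ⬝ᵥ (c ^ 2 • ((q ⬝ᵥ x) • q)) = c ^ 2 * (q ⬝ᵥ x) ^ 2 := by
        rw [dotProduct_smul, dotProduct_smul, smul_eq_mul, smul_eq_mul, dotProduct_comm]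
        ring
      rw [this]
    have hS0 : x ⬝ᵥ (S *ᵥ x) = 0 := by nlinarith [hSnonneg x, sq_nonneg (q ⬝ᵥ x), sq_nonneg c]
    exact hSker x hS0
  have hK'fix : ∀ x, S' *ᵥ x = 0 → K *ᵥ x = x := fun x hx => hKfix x (hS'S x hx)
  -- determinant of M := S + K
  have hdetM : (S + K).det = pdet S := det_add_kernelProj S K hSH hKS hKfix
  have hPSD : S.PosSemidef := .of_dotProduct_mulVec_nonneg hSH fun x => by simpa using hSnonneg x
  have hpdetpos : 0 < pdet S := by
    rw [pdet, dif_pos hSH]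
    refine Finset.prod_pos fun i _ => ?_
    by_cases hi : hSH.eigenvalues i = 0
    · simp [hi]
    · simp only [hi, if_false]
      exact lt_of_le_of_ne (hPSD.eigenvalues_nonneg i) (Ne.symm hi)
  have hKSp : K * Sp = 0 := by
    rw [hKdef, Matrix.sub_mul, Matrix.one_mul, Matrix.mul_assoc, ← Matrix.mul_assoc, h2, sub_self]
  have hMq : (S + K) *ᵥ (Sp *ᵥ q) = q := by
    rw [add_mulVec, mulVec_mulVec, mulVec_mulVec, hKSp, zero_mulVec, add_zero, hSSp_eq, hPq]
  have key : S' + K = (S + K) * (1 + vecMulVec (c ^ 2 • (Sp *ᵥ q)) q) := by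
    rw [Matrix.mul_add, Matrix.mul_one, my_mul_vecMulVec]
    have e : (S + K) *ᵥ (c ^ 2 • (Sp *ᵥ q)) = c ^ 2 • q := by
      rw [mulVec_smul, hMq]
    rw [e, ← my_smul_vecMulVec, hS'def]
    exact add_right_comm _ _ _
  have hdetS' : (S' + K).det = pdet S' := det_add_kernelProj S' K hS'H hKS' hK'fix
  have hdet1 : (1 + vecMulVec (c ^ 2 • (Sp *ᵥ q)) q).det = 1 + c ^ 2 * (q ⬝ᵥ (Sp *ᵥ q)) := by
    rw [vecMulVec_eq (Fin 1), det_one_add_replicateCol_mul_replicateRow, dotProduct_smul, smul_eq_mul]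
  constructor
  · calc pdet S' = (S' + K).det := hdetS'.symm
    _ = (S + K).det * (1 + vecMulVec (c ^ 2 • (Sp *ᵥ q)) q).det := by rw [key, det_mul]
    _ = pdet S * (1 + c ^ 2 * (q ⬝ᵥ (Sp *ᵥ q))) := by rw [hdetM, hdet1]
  · have hkereq : LinearMap.ker S'.mulVecLin = LinearMap.ker S.mulVecLin := by
      ext x
      simp only [LinearMap.mem_ker, mulVecLin_apply]
      constructor
      · exact hS'S x
      · intro hx
        have hqx : q ⬝ᵥ x = 0 := by
          calc q ⬝ᵥ x = ((Sp * S) *ᵥ q) ⬝ᵥ x := by rw [hPq]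
          _ = x ⬝ᵥ ((Sp * S) *ᵥ q) := dotProduct_comm _ _
          _ = (x ᵥ* (Sp * S)) ⬝ᵥ q := dotProduct_mulVec _ _ _
          _ = ((Sp * S)ᵀ *ᵥ x) ⬝ᵥ q := by rw [mulVec_transpose]
          _ = ((Sp * S) *ᵥ x) ⬝ᵥ q := by rw [h4]
          _ = (Sp *ᵥ (S *ᵥ x)) ⬝ᵥ q := by rw [← mulVec_mulVec]
          _ = 0 := by rw [hx, mulVec_zero, zero_dotProduct]
        rw [hS'def, add_mulVec, hx, smul_mulVec, my_vecMulVec_mulVec, hqx]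
        simp
    have r1 := LinearMap.finrank_range_add_finrank_ker S'.mulVecLin
    have r2 := LinearMap.finrank_range_add_finrank_ker S.mulVecLin
    rw [hkereq] at r1
    show S'.rank = S.rank
    unfold Matrix.rank
    omega
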